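/- arXiv:math/0003166 — 5 statements merged into one kernel-verified Lean document; each statement's English description precedes it below -/
import Mathlib

section
/- In the octonion algebra, Re((ax)b) = Re(a(xb)) for all octonions a, x, b. -/
open Matrix Quaternion
open scoped Quaternion

noncomputable section

/-- Left real matrix representation of a quaternion in the basis 1, i, j, k. -/
def phi (a : ℍ[ℝ]) : Matrix (Fin 4) (Fin 4) ℝ :=
  !![a.re, -a.imI, -a.imJ, -a.imK;
     a.imI, a.re, -a.imK, a.imJ;
     a.imJ, a.imK, a.re, -a.imI;
     a.imK, -a.imJ, a.imI, a.re]

/-- K = diag(1, -1, -1, -1). -/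
def Kmat : Matrix (Fin 4) (Fin 4) ℝ := Matrix.diagonal ![1, -1, -1, -1]

/-- Right real matrix representation of a quaternion: τ(a) = K φ(a)ᵀ K. -/
def tau (a : ℍ[ℝ]) : Matrix (Fin 4) (Fin 4) ℝ := Kmat * (phi a)ᵀ * Kmat

/-- Coordinate vector of a quaternion in the basis 1, i, j, k. -/
def qvec (x : ℍ[ℝ]) : Fin 4 → ℝ := ![x.re, x.imI, x.imJ, x.imK]

/-- The octonions, as pairs of quaternions via the Cayley–Dickson process. -/
abbrev Octo := ℍ[ℝ] × ℍ[ℝ]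

/-- Octonion multiplication:
  (a' + a''e)(b' + b''e) = (a'b' − b̄''a'') + (b''a' + a'' b̄')e. -/
def Omul (a b : Octo) : Octo :=
  (a.1 * b.1 - star b.2 * a.2, b.2 * a.1 + a.2 * star b.1)

/-- Octonion conjugation. -/
def Oconj (a : Octo) : Octo := (star a.1, -a.2)

/-- Real part of an octonion. -/
def Ore (a : Octo) : ℝ := a.1.re

/-- The octonion 1. -/
def Oone : Octo := (1, 0)

/-- Squared norm of an octonion. -/
def OnormSq (a : Octo) : ℝ := Quaternion.normSq a.1 + Quaternion.normSq a.2

/-- Norm of an octonion. -/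
def Onorm (a : Octo) : ℝ := Real.sqrt (OnormSq a)

theorem Ore_assoc (a x b : Octo) :
    Ore (Omul (Omul a x) b) = Ore (Omul a (Omul x b)) := by
  simp [Omul, Ore, Quaternion.re_mul, Quaternion.re_sub, Quaternion.re_star,
    Quaternion.imI_star, Quaternion.imJ_star, Quaternion.imK_star,
    Quaternion.re_add, Quaternion.imI_mul, Quaternion.imJ_mul, Quaternion.imK_mul,
    Quaternion.imI_sub, Quaternion.imJ_sub, Quaternion.imK_sub,
    Quaternion.imI_add, Quaternion.imJ_add, Quaternion.imK_add]
  ring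
end
end

section
/- The octonion norm is multiplicative: |ab| = |a| |b| for all octonions a, b. -/
open Matrix Quaternion
open scoped Quaternion

noncomputable section

lemma OnormSq_nonneg (a : Octo) : (0:ℝ) ≤ OnormSq a :=
  add_nonneg Quaternion.normSq_nonneg Quaternion.normSq_nonneg

lemma OnormSq_mul (a b : Octo) : OnormSq (Omul a b) = OnormSq a * OnormSq b := by
  obtain ⟨x, y⟩ := a
  obtain ⟨z, w⟩ := b
  simp only [OnormSq, Omul, Quaternion.normSq_def', Quaternion.re_mul,
    Quaternion.imI_mul, Quaternion.imJ_mul, Quaternion.imK_mul,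
    Quaternion.re_sub, Quaternion.imI_sub, Quaternion.imJ_sub, Quaternion.imK_sub,
    Quaternion.re_add, Quaternion.imI_add, Quaternion.imJ_add, Quaternion.imK_add,
    Quaternion.re_star, Quaternion.imI_star, Quaternion.imJ_star, Quaternion.imK_star]
  ring

theorem Onorm_mul (a b : Octo) : Onorm (Omul a b) = Onorm a * Onorm b := by
  rw [Onorm, Onorm, Onorm, OnormSq_mul,
    Real.sqrt_mul (OnormSq_nonneg a)]
end
end

section
/- Define the left matrix representation ω : 𝕆 → M₈(ℝ) of an octonion a = a' + a''e (with a', a'' ∈ ℍ) by the block matrix ω(a) = [[φ(a'), −τ(a'')K], [φ(a'')K, τ(a')]] where K = diag(1,-1,-1,-1). Then for all a, x ∈ 𝕆, identifying x with its coordinate vector x⃗ ∈ ℝ⁸ in the basis 1, e₁, …, e₇: (ax)⃗ = ω(a) x⃗. -/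
open Matrix Quaternion
open scoped Quaternion

noncomputable section

/-- Left real matrix representation of an octonion a = a' + a''e:
  ω(a) = [[φ(a'), −τ(a'')K], [φ(a'')K, τ(a')]]. -/
def omega (a : Octo) : Matrix (Fin 4 ⊕ Fin 4) (Fin 4 ⊕ Fin 4) ℝ :=
  Matrix.fromBlocks (phi a.1) (-(tau a.2 * Kmat)) (phi a.2 * Kmat) (tau a.1)

/-- Coordinate vector of an octonion in the basis 1, e₁, …, e₇. -/
def ovec (x : Octo) : Fin 4 ⊕ Fin 4 → ℝ := Sum.elim (qvec x.1) (qvec x.2)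

lemma tau_eq (a : ℍ[ℝ]) : tau a =
    !![a.re, -a.imI, -a.imJ, -a.imK;
       a.imI, a.re, a.imK, -a.imJ;
       a.imJ, -a.imK, a.re, a.imI;
       a.imK, a.imJ, -a.imI, a.re] := by
  ext i j
  fin_cases i <;> fin_cases j <;>
    simp [tau, Kmat, phi, Matrix.mul_apply, Fin.sum_univ_four, Matrix.diagonal, Matrix.transpose, Matrix.vecHead, Matrix.vecTail]

lemma tauK_eq (a : ℍ[ℝ]) : tau a * Kmat =
    !![a.re, a.imI, a.imJ, a.imK;
       a.imI, -a.re, -a.imK, a.imJ;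
       a.imJ, a.imK, -a.re, -a.imI;
       a.imK, -a.imJ, a.imI, -a.re] := by
  ext i j
  fin_cases i <;> fin_cases j <;>
    simp [tau_eq, Kmat, Matrix.mul_apply, Fin.sum_univ_four, Matrix.diagonal]

lemma phiK_eq (a : ℍ[ℝ]) : phi a * Kmat =
    !![a.re, a.imI, a.imJ, a.imK;
       a.imI, -a.re, a.imK, -a.imJ;
       a.imJ, -a.imK, -a.re, a.imI;
       a.imK, a.imJ, -a.imI, -a.re] := by
  ext i j
  fin_cases i <;> fin_cases j <;>
    simp [phi, Kmat, Matrix.mul_apply, Fin.sum_univ_four, Matrix.diagonal]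

set_option maxHeartbeats 2000000 in
theorem ovec_omul (a x : Octo) : ovec (Omul a x) = omega a *ᵥ ovec x := by
  funext i
  rw [omega, ovec, Matrix.fromBlocks_mulVec]
  cases i <;> rename_i j <;> fin_cases j <;>
    simp [ovec, Omul, qvec, phi, tauK_eq, tau_eq, phiK_eq, Matrix.mulVec, Matrix.vecMul, Kmat, Matrix.diagonal, Matrix.vecHead, Matrix.vecTail, dotProduct,
      Fin.sum_univ_four, Quaternion.re_mul, Quaternion.imI_mul,
      Quaternion.imJ_mul, Quaternion.imK_mul, Fin.ext_iff] <;> ring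
end
end

section
/- Although ω is not multiplicative, it satisfies ω(a²) = ω(a)² for every octonion a, and likewise the right representation ν satisfies ν(a²) = ν(a)², and ω(a)ν(a) = ν(a)ω(a). -/
open Matrix Quaternion
open scoped Quaternion

noncomputable section

/-- Right real matrix representation of an octonion a = a' + a''e,
  characterized by (xa)⃗ = ν(a) x⃗:
  ν(a) = [[τ(a'), −φ(ā'')], [φ(a''), τ(ā')]]. -/
def nuO (a : Octo) : Matrix (Fin 4 ⊕ Fin 4) (Fin 4 ⊕ Fin 4) ℝ :=
  Matrix.fromBlocks (tau a.1) (-(phi (star a.2))) (phi a.2) (tau (star a.1))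

theorem mul_fin_four {α : Type*} [NonUnitalNonAssocSemiring α] (a00 a01 a02 a03 a10 a11 a12 a13 a20 a21 a22 a23 a30 a31 a32 a33 b00 b01 b02 b03 b10 b11 b12 b13 b20 b21 b22 b23 b30 b31 b32 b33 : α) :
  !![a00, a01, a02, a03;
     a10, a11, a12, a13;
     a20, a21, a22, a23;
     a30, a31, a32, a33] * !![b00, b01, b02, b03;
     b10, b11, b12, b13;
     b20, b21, b22, b23;
     b30, b31, b32, b33] =
  !![a00*b00+a01*b10+a02*b20+a03*b30, a00*b01+a01*b11+a02*b21+a03*b31, a00*b02+a01*b12+a02*b22+a03*b32, a00*b03+a01*b13+a02*b23+a03*b33;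
     a10*b00+a11*b10+a12*b20+a13*b30, a10*b01+a11*b11+a12*b21+a13*b31, a10*b02+a11*b12+a12*b22+a13*b32, a10*b03+a11*b13+a12*b23+a13*b33;
     a20*b00+a21*b10+a22*b20+a23*b30, a20*b01+a21*b11+a22*b21+a23*b31, a20*b02+a21*b12+a22*b22+a23*b32, a20*b03+a21*b13+a22*b23+a23*b33;
     a30*b00+a31*b10+a32*b20+a33*b30, a30*b01+a31*b11+a32*b21+a33*b31, a30*b02+a31*b12+a32*b22+a33*b32, a30*b03+a31*b13+a32*b23+a33*b33] := by
  ext i j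
  fin_cases i <;> fin_cases j <;>
    simp [Matrix.mul_apply, Fin.sum_univ_succ, add_assoc]

theorem add_fin_four {α : Type*} [Add α] (a00 a01 a02 a03 a10 a11 a12 a13 a20 a21 a22 a23 a30 a31 a32 a33 b00 b01 b02 b03 b10 b11 b12 b13 b20 b21 b22 b23 b30 b31 b32 b33 : α) :
  !![a00, a01, a02, a03;
     a10, a11, a12, a13;
     a20, a21, a22, a23;
     a30, a31, a32, a33] + !![b00, b01, b02, b03;
     b10, b11, b12, b13;
     b20, b21, b22, b23;
     b30, b31, b32, b33] =
  !![a00+b00, a01+b01, a02+b02, a03+b03;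
     a10+b10, a11+b11, a12+b12, a13+b13;
     a20+b20, a21+b21, a22+b22, a23+b23;
     a30+b30, a31+b31, a32+b32, a33+b33] := by
  ext i j; fin_cases i <;> fin_cases j <;> simp

theorem sub_fin_four {α : Type*} [Sub α] (a00 a01 a02 a03 a10 a11 a12 a13 a20 a21 a22 a23 a30 a31 a32 a33 b00 b01 b02 b03 b10 b11 b12 b13 b20 b21 b22 b23 b30 b31 b32 b33 : α) :
  !![a00, a01, a02, a03;
     a10, a11, a12, a13;
     a20, a21, a22, a23;
     a30, a31, a32, a33] - !![b00, b01, b02, b03;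
     b10, b11, b12, b13;
     b20, b21, b22, b23;
     b30, b31, b32, b33] =
  !![a00-b00, a01-b01, a02-b02, a03-b03;
     a10-b10, a11-b11, a12-b12, a13-b13;
     a20-b20, a21-b21, a22-b22, a23-b23;
     a30-b30, a31-b31, a32-b32, a33-b33] := by
  ext i j; fin_cases i <;> fin_cases j <;> simp

theorem neg_fin_four {α : Type*} [Neg α] (a00 a01 a02 a03 a10 a11 a12 a13 a20 a21 a22 a23 a30 a31 a32 a33 : α) :
  -!![a00, a01, a02, a03;
     a10, a11, a12, a13;
     a20, a21, a22, a23;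
     a30, a31, a32, a33] =
  !![-a00, -a01, -a02, -a03;
     -a10, -a11, -a12, -a13;
     -a20, -a21, -a22, -a23;
     -a30, -a31, -a32, -a33] := by
  ext i j; fin_cases i <;> fin_cases j <;> simp

theorem vecCons_eq_iff {α : Type*} {n : ℕ} {a b : α} {u v : Fin n → α} :
    Matrix.vecCons a u = Matrix.vecCons b v ↔ a = b ∧ u = v := by
  constructor
  · intro h
    refine ⟨congrFun h 0, funext fun i => ?_⟩
    simpa using congrFun h i.succ
  · rintro ⟨rfl, rfl⟩; rfl

theorem of_eq_iff {m n α : Type*} {x y : m → n → α} :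
    Matrix.of x = Matrix.of y ↔ x = y := Matrix.of.apply_eq_iff_eq

lemma Kmat_eq : Kmat = !![1,0,0,0; 0,-1,0,0; 0,0,-1,0; 0,0,0,-1] := by
  ext i j
  fin_cases i <;> fin_cases j <;>
    simp [Kmat, Matrix.diagonal_apply, Matrix.vecHead, Matrix.vecTail]

set_option maxHeartbeats 1000000 in
theorem omega_nu_sq_comm (a : Octo) :
    omega (Omul a a) = omega a ^ 2 ∧
    nuO (Omul a a) = nuO a ^ 2 ∧
    omega a * nuO a = nuO a * omega a := by
  obtain ⟨p, q⟩ := a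
  refine ⟨?_, ?_, ?_⟩ <;>
    simp only [omega, nuO, Omul, pow_two, Matrix.fromBlocks_multiply] <;>
    rw [Matrix.fromBlocks_inj] <;>
    refine ⟨?_, ?_, ?_, ?_⟩ <;>
    · simp only [phi, tau_eq, Kmat_eq, Matrix.neg_mul, Matrix.mul_neg,
        Quaternion.re_mul, Quaternion.imI_mul, Quaternion.imJ_mul, Quaternion.imK_mul,
        Quaternion.re_sub, Quaternion.imI_sub, Quaternion.imJ_sub, Quaternion.imK_sub,
        Quaternion.re_add, Quaternion.imI_add, Quaternion.imJ_add, Quaternion.imK_add,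
        Quaternion.re_neg, Quaternion.imI_neg, Quaternion.imJ_neg, Quaternion.imK_neg,
        Quaternion.re_star, Quaternion.imI_star, Quaternion.imJ_star, Quaternion.imK_star,
        mul_fin_four, neg_fin_four, add_fin_four, sub_fin_four,
        of_eq_iff, vecCons_eq_iff, and_true, eq_self_iff_true]
      repeat' apply And.intro
      all_goals ring
end
end

section
/- For all octonions a, b, the representation of aba factors: ω(aba) = ω(a)ω(b)ω(a), where aba denotes the (well-defined by flexibility) product (ab)a = a(ba) and ω is the left 8×8 real matrix representation. -/
open Matrix Quaternion
open scoped Quaternion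

noncomputable section

set_option maxHeartbeats 2000000

lemma tau_eq_s19 (x : ℍ[ℝ]) :
    tau x = !![x.re,-x.imI,-x.imJ,-x.imK; x.imI,x.re,x.imK,-x.imJ;
               x.imJ,-x.imK,x.re,x.imI; x.imK,x.imJ,-x.imI,x.re] := by
  rw [tau, Kmat_eq, phi]
  ext i j; fin_cases i <;> fin_cases j <;>
    simp [Matrix.mul_apply, Fin.sum_univ_four, Matrix.vecHead, Matrix.vecTail, Matrix.vecMul, dotProduct]

lemma phi_eq (x : ℍ[ℝ]) :
    phi x = !![x.re,-x.imI,-x.imJ,-x.imK; x.imI,x.re,-x.imK,x.imJ;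
               x.imJ,x.imK,x.re,-x.imI; x.imK,-x.imJ,x.imI,x.re] := rfl

lemma mul4 (a00 a01 a02 a03 a10 a11 a12 a13 a20 a21 a22 a23 a30 a31 a32 a33 b00 b01 b02 b03 b10 b11 b12 b13 b20 b21 b22 b23 b30 b31 b32 b33 : ℝ) :
    !![a00, a01, a02, a03; a10, a11, a12, a13; a20, a21, a22, a23; a30, a31, a32, a33] * !![b00, b01, b02, b03; b10, b11, b12, b13; b20, b21, b22, b23; b30, b31, b32, b33] = !![a00*b00 + a01*b10 + a02*b20 + a03*b30, a00*b01 + a01*b11 + a02*b21 + a03*b31, a00*b02 + a01*b12 + a02*b22 + a03*b32, a00*b03 + a01*b13 + a02*b23 + a03*b33; a10*b00 + a11*b10 + a12*b20 + a13*b30, a10*b01 + a11*b11 + a12*b21 + a13*b31, a10*b02 + a11*b12 + a12*b22 + a13*b32, a10*b03 + a11*b13 + a12*b23 + a13*b33; a20*b00 + a21*b10 + a22*b20 + a23*b30, a20*b01 + a21*b11 + a22*b21 + a23*b31, a20*b02 + a21*b12 + a22*b22 + a23*b32, a20*b03 + a21*b13 + a22*b23 + a23*b33; a30*b00 + a31*b10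 + a32*b20 + a33*b30, a30*b01 + a31*b11 + a32*b21 + a33*b31, a30*b02 + a31*b12 + a32*b22 + a33*b32, a30*b03 + a31*b13 + a32*b23 + a33*b33] := by
  ext i j
  fin_cases i <;> fin_cases j <;>
    simp [Matrix.mul_apply, Fin.sum_univ_four, Matrix.vecHead, Matrix.vecTail]

lemma add4 (a00 a01 a02 a03 a10 a11 a12 a13 a20 a21 a22 a23 a30 a31 a32 a33 b00 b01 b02 b03 b10 b11 b12 b13 b20 b21 b22 b23 b30 b31 b32 b33 : ℝ) :
    !![a00, a01, a02, a03; a10, a11, a12, a13; a20, a21, a22, a23; a30, a31, a32, a33] + !![b00, b01, b02, b03; b10, b11, b12, b13; b20, b21, b22, b23; b30, b31, b32, b33] = !![a00+b00, a01+b01, a02+b02, a03+b03; a10+b10, a11+b11, a12+b12, a13+b13; a20+b20, a21+b21, a22+b22, a23+b23; a30+b30, a31+b31, a32+b32, a33+b33] := by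
  ext i j
  fin_cases i <;> fin_cases j <;> simp [Matrix.vecHead, Matrix.vecTail]

lemma neg4 (a00 a01 a02 a03 a10 a11 a12 a13 a20 a21 a22 a23 a30 a31 a32 a33 : ℝ) :
    -!![a00, a01, a02, a03; a10, a11, a12, a13; a20, a21, a22, a23; a30, a31, a32, a33] = !![-a00, -a01, -a02, -a03; -a10, -a11, -a12, -a13; -a20, -a21, -a22, -a23; -a30, -a31, -a32, -a33] := by
  ext i j
  fin_cases i <;> fin_cases j <;> simp [Matrix.vecHead, Matrix.vecTail]

lemma vec4_eq {a₀ a₁ a₂ a₃ b₀ b₁ b₂ b₃ : ℝ} (h₀ : a₀ = b₀) (h₁ : a₁ = b₁)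
    (h₂ : a₂ = b₂) (h₃ : a₃ = b₃) : ![a₀, a₁, a₂, a₃] = ![b₀, b₁, b₂, b₃] := by
  subst_vars; rfl

lemma eq4 {a00 a01 a02 a03 a10 a11 a12 a13 a20 a21 a22 a23 a30 a31 a32 a33 b00 b01 b02 b03 b10 b11 b12 b13 b20 b21 b22 b23 b30 b31 b32 b33 : ℝ} (h00 : a00 = b00) (h01 : a01 = b01) (h02 : a02 = b02) (h03 : a03 = b03) (h10 : a10 = b10) (h11 : a11 = b11) (h12 : a12 = b12) (h13 : a13 = b13) (h20 : a20 = b20) (h21 : a21 = b21) (h22 : a22 = b22) (h23 : a23 = b23) (h30 : a30 = b30) (h31 : a31 = b31) (h32 : a32 = b32) (h33 : a33 = b33) :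
    !![a00, a01, a02, a03; a10, a11, a12, a13; a20, a21, a22, a23; a30, a31, a32, a33] = !![b00, b01, b02, b03; b10, b11, b12, b13; b20, b21, b22, b23; b30, b31, b32, b33] := by
  subst_vars; rfl

theorem omega_aba (a b : Octo) :
    omega (Omul (Omul a b) a) = omega a * omega b * omega a := by
  simp only [omega, Omul, phi_eq, tau_eq_s19, Kmat_eq]
  simp only [Quaternion.re_mul, Quaternion.imI_mul, Quaternion.imJ_mul, Quaternion.imK_mul,
    Quaternion.re_sub, Quaternion.imI_sub, Quaternion.imJ_sub, Quaternion.imK_sub,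
    Quaternion.re_add, Quaternion.imI_add, Quaternion.imJ_add, Quaternion.imK_add,
    Quaternion.re_star, Quaternion.imI_star, Quaternion.imJ_star, Quaternion.imK_star]
  simp only [Matrix.fromBlocks_multiply]
  simp only [mul4, neg4, add4]
  rw [Matrix.fromBlocks_inj]
  refine ⟨eq4 ?_ ?_ ?_ ?_ ?_ ?_ ?_ ?_ ?_ ?_ ?_ ?_ ?_ ?_ ?_ ?_,
          eq4 ?_ ?_ ?_ ?_ ?_ ?_ ?_ ?_ ?_ ?_ ?_ ?_ ?_ ?_ ?_ ?_,
          eq4 ?_ ?_ ?_ ?_ ?_ ?_ ?_ ?_ ?_ ?_ ?_ ?_ ?_ ?_ ?_ ?_,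
          eq4 ?_ ?_ ?_ ?_ ?_ ?_ ?_ ?_ ?_ ?_ ?_ ?_ ?_ ?_ ?_ ?_⟩ <;> ring
end
end
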